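/- Let A be a finite-dimensional k-algebra, e an idempotent, and M an indecomposable finitely generated right A-module annihilated by AeA. If the injective dimension of M as an A-module is at most 1, then the injective dimension of M as an A/AeA-module is at most 1. -/
import Mathlib


open MulOpposite

section Aux

variable {A B : Type} [Ring A] [Ring B]

/-- The additive subgroup generated by `A e A`. -/
def genG (A : Type) [Ring A] (e : A) : AddSubgroup A :=
  AddSubgroup.closure {y : A | ∃ a b : A, y = a * e * b}

lemma mul_mem_genG_left (e a : A) {g : A} (hg : g ∈ genG A e) : a * g ∈ genG A e := by
  refine AddSubgroup.closure_induction (p := fun g _ => a * g ∈ genG A e) ?_ ?_ ?_ ?_ hg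
  · rintro y ⟨c, d, rfl⟩
    exact AddSubgroup.subset_closure ⟨a * c, d, by simp [mul_assoc]⟩
  · simpa [mul_zero] using (genG A e).zero_mem
  · intro x y _ _ hx hy
    rw [mul_add]; exact (genG A e).add_mem hx hy
  · intro x _ hx
    rw [mul_neg]; exact (genG A e).neg_mem hx

lemma genG_smul_eq_zero {X : Type} [AddCommGroup X] [Module Aᵐᵒᵖ X] {e : A} (he : e * e = e)
    (P : Submodule Aᵐᵒᵖ X) (hP : ∀ p ∈ P, ∀ g ∈ genG A e, op g • p = (0 : X))
    (x : X) (hx : ∀ g ∈ genG A e, op g • x ∈ P) :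
    ∀ g ∈ genG A e, op g • x = 0 := by
  intro g hg
  refine AddSubgroup.closure_induction (p := fun g _ => op g • x = (0 : X)) ?_ ?_ ?_ ?_ hg
  · rintro y ⟨a, b, rfl⟩
    have hfac : a * e * b = (a * e) * (e * b) := by
      conv_rhs => rw [mul_assoc a e (e*b), ← mul_assoc e e b, he, ← mul_assoc a e b]
    have h1 : (a * e : A) ∈ genG A e := AddSubgroup.subset_closure ⟨a, 1, by rw [mul_one]⟩
    have h2 : (e * b : A) ∈ genG A e := AddSubgroup.subset_closure ⟨1, b, by rw [one_mul]⟩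
    show op (a * e * b) • x = (0 : X)
    rw [hfac, op_mul, mul_smul]
    exact hP _ (hx _ h1) _ h2
  · show op (0 : A) • x = (0 : X)
    rw [op_zero, zero_smul]
  · intro y z _ _ hy hz
    show op (y + z) • x = (0 : X)
    rw [op_add, add_smul] at *
    rw [hy, hz, add_zero]
  · intro y _ hy
    show op (-y) • x = (0 : X)
    rw [op_neg, neg_smul] at *
    rw [hy, neg_zero]

/-- Independence of the choice of preimage. -/
lemma desc_indep (π : A →+* B) (hπ : Function.Surjective π) (e : A)
    (hker : ∀ x : A, π x = 0 ↔ x ∈ genG A e)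
    {X : Type} [AddCommGroup X] [Module Aᵐᵒᵖ X]
    (hX : ∀ (x : X) (g : A), g ∈ genG A e → op g • x = 0)
    (a : A) (b : B) (hb : π a = b) (x : X) :
    op (Function.surjInv hπ b) • x = op a • x := by
  have h0 : π (Function.surjInv hπ b - a) = 0 := by
    rw [map_sub, Function.surjInv_eq hπ, hb, sub_self]
  have h1 := hX x _ ((hker _).mp h0)
  rw [op_sub, sub_smul, sub_eq_zero] at h1
  exact h1

/-- The descended `Bᵐᵒᵖ`-module structure on an `Aᵐᵒᵖ`-module killed by `AeA`. -/
noncomputable def descModule (π : A →+* B) (hπ : Function.Surjective π) (e : A)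
    (hker : ∀ x : A, π x = 0 ↔ x ∈ genG A e)
    (X : Type) [AddCommGroup X] [Module Aᵐᵒᵖ X]
    (hX : ∀ (x : X) (g : A), g ∈ genG A e → op g • x = 0) : Module Bᵐᵒᵖ X :=
  letI : SMul Bᵐᵒᵖ X := ⟨fun b x => op (Function.surjInv hπ b.unop) • x⟩
  Module.ofMinimalAxioms
    (fun b x y => smul_add (op (Function.surjInv hπ b.unop)) x y)
    (fun b c x => by
      show op (Function.surjInv hπ (b + c).unop) • x
          = op (Function.surjInv hπ b.unop) • x + op (Function.surjInv hπ c.unop) • x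
      have : π (Function.surjInv hπ b.unop + Function.surjInv hπ c.unop) = (b + c).unop := by
        rw [map_add, Function.surjInv_eq hπ, Function.surjInv_eq hπ, unop_add]
      rw [desc_indep π hπ e hker hX _ _ this x, op_add, add_smul])
    (fun b c x => by
      show op (Function.surjInv hπ (b * c).unop) • x
          = op (Function.surjInv hπ b.unop) • (op (Function.surjInv hπ c.unop) • x)
      have : π (Function.surjInv hπ c.unop * Function.surjInv hπ b.unop) = (b * c).unop := by
        rw [map_mul, Function.surjInv_eq hπ, Function.surjInv_eq hπ, unop_mul]
      rw [desc_indep π hπ e hker hX _ _ this x, op_mul, mul_smul])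
    (fun x => by
      show op (Function.surjInv hπ (1 : Bᵐᵒᵖ).unop) • x = x
      have : π (1 : A) = (1 : Bᵐᵒᵖ).unop := by rw [map_one, unop_one]
      rw [desc_indep π hπ e hker hX _ _ this x, op_one, one_smul])

/-- With the descended structure, the scalar action of `b` agrees with the action of any
preimage of `b.unop`. -/
lemma descModule_smul_eq (π : A →+* B) (hπ : Function.Surjective π) (e : A)
    (hker : ∀ x : A, π x = 0 ↔ x ∈ genG A e)
    {X : Type} [AddCommGroup X] [Module Aᵐᵒᵖ X]
    (hX : ∀ (x : X) (g : A), g ∈ genG A e → op g • x = 0)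
    (b : Bᵐᵒᵖ) (a : A) (hb : π a = b.unop) (x : X) :
    (letI := descModule π hπ e hker X hX; b • x) = op a • x :=
  desc_indep π hπ e hker hX a b.unop hb x

/-- The submodule of elements killed by `AeA`. -/
def annSub (e : A) (X : Type) [AddCommGroup X] [Module Aᵐᵒᵖ X] : Submodule Aᵐᵒᵖ X where
  carrier := {x | ∀ g ∈ genG A e, op g • x = 0}
  add_mem' := fun hx hy g hg => by rw [smul_add, hx g hg, hy g hg, add_zero]
  zero_mem' := fun g hg => smul_zero _
  smul_mem' := fun r x hx g hg => by
    rw [smul_smul, ← op_unop r, ← op_mul]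
    exact hx _ (mul_mem_genG_left e r.unop hg)

lemma annSub_kill (e : A) (X : Type) [AddCommGroup X] [Module Aᵐᵒᵖ X] :
    ∀ (x : annSub e X) (g : A), g ∈ genG A e → op g • x = 0 :=
  fun x g hg => Subtype.ext (x.2 g hg)

/-- The descended `Bᵐᵒᵖ`-module structure on `annSub e X`. -/
noncomputable def annModule (π : A →+* B) (hπ : Function.Surjective π) (e : A)
    (hker : ∀ x : A, π x = 0 ↔ x ∈ genG A e)
    (X : Type) [AddCommGroup X] [Module Aᵐᵒᵖ X] : Module Bᵐᵒᵖ (annSub e X) :=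
  descModule π hπ e hker (annSub e X) (annSub_kill e X)

lemma inj_of_equiv {R X Y : Type} [Ring R] [AddCommGroup X] [AddCommGroup Y]
    [Module R X] [Module R Y] (eqv : X ≃ₗ[R] Y) (hY : Module.Injective R Y) :
    Module.Injective R X := by
  constructor
  intro U V _ _ _ _ f hf g
  obtain ⟨h, hh⟩ := hY.out f hf (eqv.toLinearMap ∘ₗ g)
  refine ⟨eqv.symm.toLinearMap ∘ₗ h, fun u => ?_⟩
  simp only [LinearMap.coe_comp, Function.comp_apply, hh u, LinearEquiv.coe_coe,
    LinearEquiv.symm_apply_apply]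

/-- If `X` is injective over `Aᵐᵒᵖ` then `annSub e X` is injective over `Bᵐᵒᵖ`. -/
lemma inj_descent (π : A →+* B) (hπ : Function.Surjective π) (e : A)
    (hker : ∀ x : A, π x = 0 ↔ x ∈ genG A e)
    (X : Type) [AddCommGroup X] [Module Aᵐᵒᵖ X] (hX : Module.Injective Aᵐᵒᵖ X) :
    @Module.Injective Bᵐᵒᵖ _ (annSub e X) _ (annModule π hπ e hker X) := by
  letI : Module Bᵐᵒᵖ (annSub e X) := annModule π hπ e hker X
  constructor
  intro U V _ _ _ _ f hf g
  letI : Module Aᵐᵒᵖ U := Module.compHom U (RingHom.op π)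
  letI : Module Aᵐᵒᵖ V := Module.compHom V (RingHom.op π)
  let fA : U →ₗ[Aᵐᵒᵖ] V :=
    { toFun := f, map_add' := f.map_add,
      map_smul' := fun r u => f.map_smul (op (π r.unop)) u }
  let gX : U →ₗ[Aᵐᵒᵖ] X :=
    { toFun := fun u => (g u : X),
      map_add' := fun u v => congrArg Subtype.val (g.map_add u v)
      map_smul' := fun r u => by
        have h1 : g (r • u) = op r.unop • (g u) := by
          show g ((op (π r.unop) : Bᵐᵒᵖ) • u) = _
          rw [g.map_smul]
          exact desc_indep π hπ e hker (annSub_kill e X) r.unop _ rfl (g u)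
        show ((g (r • u) : X)) = r • (g u : X)
        rw [h1, ← op_unop r]
        rfl }
  obtain ⟨H, hH⟩ := hX.out fA hf gX
  refine ⟨{ toFun := fun v => ⟨H v, fun gg hgg => ?_⟩, map_add' := fun v w => ?_,
            map_smul' := fun b v => ?_ }, fun u => ?_⟩
  · have hz : (op gg : Aᵐᵒᵖ) • v = 0 := by
      show (op (π gg) : Bᵐᵒᵖ) • v = 0
      rw [(hker gg).mpr hgg, op_zero, zero_smul]
    rw [← H.map_smul, hz, H.map_zero]
  · exact Subtype.ext (H.map_add v w)
  · apply Subtype.ext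
    show H (b • v) = op (Function.surjInv hπ b.unop) • H v
    have h2 : b • v = (op (Function.surjInv hπ b.unop) : Aᵐᵒᵖ) • v := by
      show b • v = (op (π (Function.surjInv hπ b.unop)) : Bᵐᵒᵖ) • v
      rw [Function.surjInv_eq hπ, op_unop]
    rw [h2, H.map_smul]
  · exact Subtype.ext (hH u)

end Aux

/-- `idLE R d M` : the `R`-module `M` has injective dimension at most `d`. -/
def idLE (R : Type) [Ring R] : ℕ → (M : Type) → [_inst : AddCommGroup M] → [_inst2 : Module R M] → Prop
  | 0, M, _, _ => Module.Injective R M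
  | d + 1, M, _, _ =>
    ∃ (I : ModuleCat R) (f : M →ₗ[R] I), Module.Injective R I ∧
      Function.Injective f ∧ idLE R d (I ⧸ LinearMap.range f)

/-- Let `A` be a finite-dimensional `k`-algebra, `e` an idempotent and
`B = A/AeA` (encoded as a surjective ring homomorphism `π : A → B` whose kernel is the
two-sided ideal generated by `e`).  If `M` is an indecomposable finitely generated right
`A`-module annihilated by `AeA` with `id_A M ≤ 1`, then `M`, viewed as a right `B`-module,
has injective dimension at most `1` over `B`. -/
theorem stmt5 (k A B : Type) [Field k] [Ring A] [Algebra k A] [FiniteDimensional k A]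
    [Ring B] (π : A →+* B) (hπ : Function.Surjective π)
    (e : A) (he : e * e = e)
    (hker : ∀ x : A, π x = 0 ↔ x ∈ AddSubgroup.closure {y : A | ∃ a b : A, y = a * e * b})
    (M : Type) [AddCommGroup M] [Module Aᵐᵒᵖ M] [Module.Finite Aᵐᵒᵖ M]
    -- `M` is indecomposable
    (hnt : Nontrivial M)
    (hindec : ∀ f : M →ₗ[Aᵐᵒᵖ] M, f ∘ₗ f = f → f = 0 ∨ f = LinearMap.id)
    -- `M` is annihilated by the two-sided ideal `AeA`
    (hann : ∀ (m : M) (x : A),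
      x ∈ AddSubgroup.closure {y : A | ∃ a b : A, y = a * e * b} → (op x) • m = 0)
    -- `id_A M ≤ 1`
    (hid : idLE Aᵐᵒᵖ 1 M) :
    ∃ (N : ModuleCat Bᵐᵒᵖ) (φ : M ≃+ N),
      (∀ (a : A) (m : M), φ ((op a) • m) = (op (π a)) • φ m) ∧
      idLE Bᵐᵒᵖ 1 N := by
  have hker' : ∀ x : A, π x = 0 ↔ x ∈ genG A e := hker
  have hannM : ∀ (m : M) (g : A), g ∈ genG A e → op g • m = 0 := hann
  -- unfold the hypothesis `idLE Aᵐᵒᵖ 1 M`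
  have hid' : ∃ (I : ModuleCat Aᵐᵒᵖ) (f : M →ₗ[Aᵐᵒᵖ] I), Module.Injective Aᵐᵒᵖ I ∧
      Function.Injective f ∧ Module.Injective Aᵐᵒᵖ (I ⧸ LinearMap.range f) := hid
  obtain ⟨I, f, hIinj, hfinj, hQinj⟩ := hid'
  -- the `B`-module structure on `M`
  letI instMB : Module Bᵐᵒᵖ M := descModule π hπ e hker' M hannM
  -- the `B`-module structures on the annihilator submodules
  letI instIB : Module Bᵐᵒᵖ (annSub e I) := annModule π hπ e hker' I
  letI instQB : Module Bᵐᵒᵖ (annSub e (I ⧸ LinearMap.range f)) :=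
    annModule π hπ e hker' (I ⧸ LinearMap.range f)
  -- the embedding `M → annSub e I` over `Bᵐᵒᵖ`
  have hfann : ∀ (m : M) (g : A), g ∈ genG A e → op g • f m = 0 := by
    intro m g hg
    rw [← f.map_smul, hannM m g hg, f.map_zero]
  let f' : M →ₗ[Bᵐᵒᵖ] annSub e I :=
    { toFun := fun m => ⟨f m, hfann m⟩,
      map_add' := fun m m' => Subtype.ext (f.map_add m m'),
      map_smul' := fun b m => Subtype.ext (f.map_smul (op (Function.surjInv hπ b.unop)) m) }
  refine ⟨ModuleCat.of Bᵐᵒᵖ M, AddEquiv.refl M, fun a m => ?_, ?_⟩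
  · -- compatibility of the two actions
    show op a • m = op (π a) • m
    exact (descModule_smul_eq π hπ e hker' hannM (op (π a)) a rfl m).symm
  · -- `idLE Bᵐᵒᵖ 1`
    show ∃ (J : ModuleCat Bᵐᵒᵖ) (g : M →ₗ[Bᵐᵒᵖ] J), Module.Injective Bᵐᵒᵖ J ∧
      Function.Injective g ∧ Module.Injective Bᵐᵒᵖ (J ⧸ LinearMap.range g)
    refine ⟨ModuleCat.of Bᵐᵒᵖ (annSub e I), f', inj_descent π hπ e hker' I hIinj, ?_, ?_⟩
    · intro m m' h
      exact hfinj (congrArg Subtype.val h)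
    · -- the quotient is isomorphic to `annSub e (I ⧸ range f)`
      have hmkann : ∀ (x : annSub e I) (g : A), g ∈ genG A e →
          op g • (Submodule.Quotient.mk x.1 : I ⧸ LinearMap.range f) = 0 := by
        intro x g hg
        rw [← Submodule.Quotient.mk_smul, x.2 g hg, Submodule.Quotient.mk_zero]
      let θ : annSub e I →ₗ[Bᵐᵒᵖ] annSub e (I ⧸ LinearMap.range f) :=
        { toFun := fun x => ⟨Submodule.Quotient.mk x.1, hmkann x⟩,
          map_add' := fun x y => Subtype.ext rfl,
          map_smul' := fun b x => Subtype.ext rfl }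
      have hθsurj : Function.Surjective θ := by
        rintro ⟨q, hq⟩
        obtain ⟨x, rfl⟩ := Submodule.Quotient.mk_surjective _ q
        have hrange : ∀ p ∈ LinearMap.range f, ∀ g ∈ genG A e, op g • p = (0 : I) := by
          rintro p ⟨m, rfl⟩ g hg
          exact hfann m g hg
        have hxann : ∀ g ∈ genG A e, op g • x = (0 : I) := by
          refine genG_smul_eq_zero he (LinearMap.range f) hrange x ?_
          intro g hg
          have := hq g hg
          rwa [← Submodule.Quotient.mk_smul, Submodule.Quotient.mk_eq_zero] at this
        exact ⟨⟨x, hxann⟩, Subtype.ext rfl⟩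
      have hθker : LinearMap.ker θ = LinearMap.range f' := by
        ext x
        constructor
        · intro hx
          have : Submodule.Quotient.mk x.1 = (0 : I ⧸ LinearMap.range f) :=
            congrArg Subtype.val hx
          rw [Submodule.Quotient.mk_eq_zero] at this
          obtain ⟨m, hm⟩ := this
          exact ⟨m, Subtype.ext hm⟩
        · rintro ⟨m, rfl⟩
          apply Subtype.ext
          show (Submodule.Quotient.mk (f m) : I ⧸ LinearMap.range f) = 0
          rw [Submodule.Quotient.mk_eq_zero]
          exact ⟨m, rfl⟩
      have e2 : ((annSub e I) ⧸ LinearMap.range f') ≃ₗ[Bᵐᵒᵖ]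
          annSub e (I ⧸ LinearMap.range f) :=
        hθker ▸ LinearMap.quotKerEquivOfSurjective θ hθsurj
      exact inj_of_equiv e2 (inj_descent π hπ e hker' (I ⧸ LinearMap.range f) hQinj)
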